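/- Let M_1,...,M_L be complex N×N matrices with operator norms ‖M_ℓ‖ ≤ B, and let q, q' : {1,...,L} → {1,...,Q} be maps. Call an index q₀ ∈ {1,...,Q} 'good' if exactly two elements among q(1),...,q(L),q'(1),...,q'(L) equal q₀, and whenever q(ℓ) = q'(ℓ) = q₀ for some ℓ, one has Tr M_ℓ = 0. Let T be the number of good indices. Then there exists a constant C depending only on L, Q, B (not on N) such that |Σ*_{α_1,...,α_Q} Π_{ℓ=1}^L M_ℓ[α_{q(ℓ)}, α_{q'(ℓ)}]| ≤ C·N^{Q - T/2}, where Σ* ranges over all Q-tuples of pairwise distinct indices α_1,...,α_Q ∈ {1,...,N}. -/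

import Mathlib

open Matrix

open Finset




lemma colbound {N : ℕ} (M : Matrix (Fin N) (Fin N) ℂ) (j : Fin N) :
    ∑ i, ‖M i j‖ ^ 2 ≤ ‖toEuclideanCLM (𝕜 := ℂ) M‖ ^ 2 := by
  have hx : ‖EuclideanSpace.single j (1:ℂ)‖ = 1 := by simp
  have happ : toEuclideanCLM (𝕜 := ℂ) M (EuclideanSpace.single j (1:ℂ))
      = (WithLp.equiv _ _).symm (fun i => M i j) := by
    have : EuclideanSpace.single j (1:ℂ) = (WithLp.equiv 2 (Fin N → ℂ)).symm (Pi.single j 1) := rfl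
    ext i
    simp [Matrix.mulVec_single]
  have h1 : ‖toEuclideanCLM (𝕜 := ℂ) M (EuclideanSpace.single j (1:ℂ))‖ ≤ ‖toEuclideanCLM (𝕜 := ℂ) M‖ := by
    calc ‖toEuclideanCLM (𝕜 := ℂ) M (EuclideanSpace.single j (1:ℂ))‖
        ≤ ‖toEuclideanCLM (𝕜 := ℂ) M‖ * ‖EuclideanSpace.single j (1:ℂ)‖ :=
          ContinuousLinearMap.le_opNorm _ _
      _ = ‖toEuclideanCLM (𝕜 := ℂ) M‖ := by rw [hx, mul_one]
  have h2 : ‖toEuclideanCLM (𝕜 := ℂ) M (EuclideanSpace.single j (1:ℂ))‖ ^ 2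
      = ∑ i, ‖M i j‖ ^ 2 := by
    rw [happ, EuclideanSpace.norm_eq]
    rw [Real.sq_sqrt (by positivity)]
    rfl
  calc ∑ i, ‖M i j‖ ^ 2 = _ := h2.symm
    _ ≤ ‖toEuclideanCLM (𝕜 := ℂ) M‖ ^ 2 := by
        apply pow_le_pow_left₀ (norm_nonneg _) h1



set_option maxHeartbeats 1000000 in
set_option synthInstance.maxHeartbeats 400000 in
lemma rowbound {N : ℕ} (M : Matrix (Fin N) (Fin N) ℂ) (i : Fin N)
    (colb : ∀ (M' : Matrix (Fin N) (Fin N) ℂ) (j : Fin N),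
      ∑ k, ‖M' k j‖ ^ 2 ≤ ‖toEuclideanCLM (𝕜 := ℂ) M'‖ ^ 2) :
    ∑ j, ‖M i j‖ ^ 2 ≤ ‖toEuclideanCLM (𝕜 := ℂ) M‖ ^ 2 := by
  have hstar : ‖toEuclideanCLM (𝕜 := ℂ) Mᴴ‖ = ‖toEuclideanCLM (𝕜 := ℂ) M‖ := by
    have h1 : toEuclideanCLM (𝕜 := ℂ) Mᴴ = star (toEuclideanCLM (𝕜 := ℂ) M) := by
      rw [← map_star]; rfl
    rw [h1, ContinuousLinearMap.star_eq_adjoint]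
    exact ContinuousLinearMap.adjoint.norm_map _
  have := colb Mᴴ i
  rw [hstar] at this
  refine le_trans (le_of_eq ?_) this
  apply Finset.sum_congr rfl
  intro j _
  simp [Matrix.conjTranspose_apply]

section stmt8aux

variable {N Q L₀ : ℕ}

/-- Entry-sum over injective-on-`A` tuples. -/
noncomputable def stmt8Vsum (M : Fin L₀ → Matrix (Fin N) (Fin N) ℂ) (A : Finset (Fin Q))
    (Λ : Finset (Fin L₀)) (r c : Fin L₀ → Fin Q) : ℂ :=
  ∑ α : Fin Q → Fin N,
    if Set.InjOn α ↑A then ∏ ℓ ∈ Λ, M ℓ (α (r ℓ)) (α (c ℓ)) else 0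

/-- Absolute-value entry sum over all tuples. -/
noncomputable def stmt8Asum (M : Fin L₀ → Matrix (Fin N) (Fin N) ℂ)
    (Λ : Finset (Fin L₀)) (r c : Fin L₀ → Fin Q) : ℝ :=
  ∑ α : Fin Q → Fin N, ∏ ℓ ∈ Λ, ‖M ℓ (α (r ℓ)) (α (c ℓ))‖

/-- Number of incidences of coordinate `v`. -/
def stmt8inc (Λ : Finset (Fin L₀)) (r c : Fin L₀ → Fin Q) (v : Fin Q) : ℕ :=
  (Λ.filter fun ℓ => r ℓ = v).card + (Λ.filter fun ℓ => c ℓ = v).card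

/-- The set of good coordinates. -/
noncomputable def stmt8T (M : Fin L₀ → Matrix (Fin N) (Fin N) ℂ) (Λ : Finset (Fin L₀))
    (r c : Fin L₀ → Fin Q) : Finset (Fin Q) :=
  Finset.univ.filter (fun v => stmt8inc Λ r c v = 2 ∧
    ∀ ℓ ∈ Λ, r ℓ = v → c ℓ = v → (M ℓ).trace = 0)

lemma stmt8_sum_sum_update {R : Type*} [AddCommMonoid R] (S : (Fin Q → Fin N) → R) (v : Fin Q) :
    ∑ α : Fin Q → Fin N, ∑ a : Fin N, S (Function.update α v a)
      = N • ∑ α : Fin Q → Fin N, S α := by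
  classical
  set e := Equiv.piSplitAt v (fun _ : Fin Q => Fin N) with he
  have key : ∀ (x a : Fin N) (β : ∀ _ : {j // j ≠ v}, Fin N),
      Function.update (e.symm (x, β)) v a = e.symm (a, β) := by
    intro x a β
    funext j
    by_cases h : j = v
    · subst h; simp [he, Equiv.piSplitAt, Function.update]
    · simp [he, Equiv.piSplitAt, Function.update, h]
  calc ∑ α : Fin Q → Fin N, ∑ a : Fin N, S (Function.update α v a)
      = ∑ p : Fin N × ({j // j ≠ v} → Fin N), ∑ a : Fin N, S (Function.update (e.symm p) v a) :=
        (Equiv.sum_comp e.symm _).symm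
    _ = ∑ p : Fin N × ({j // j ≠ v} → Fin N), ∑ a : Fin N, S (e.symm (a, p.2)) := by
        apply Finset.sum_congr rfl; intro p _; apply Finset.sum_congr rfl; intro a _
        rw [show p = (p.1, p.2) from rfl, key]
    _ = ∑ x : Fin N, ∑ β : {j // j ≠ v} → Fin N, ∑ a : Fin N, S (e.symm (a, β)) := by
        rw [Fintype.sum_prod_type]
    _ = ∑ _x : Fin N, ∑ p : Fin N × ({j // j ≠ v} → Fin N), S (e.symm p) := by
        apply Finset.sum_congr rfl; intro x _
        rw [Fintype.sum_prod_type, Finset.sum_comm]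
    _ = N • ∑ α : Fin Q → Fin N, S α := by
        rw [Finset.sum_const, Finset.card_univ, Fintype.card_fin]
        congr 1
        exact Equiv.sum_comp e.symm _

lemma stmt8_V_le_A (M : Fin L₀ → Matrix (Fin N) (Fin N) ℂ) (A : Finset (Fin Q))
    (Λ : Finset (Fin L₀)) (r c : Fin L₀ → Fin Q) :
    ‖stmt8Vsum M A Λ r c‖ ≤ stmt8Asum M Λ r c := by
  refine le_trans (norm_sum_le _ _) ?_
  apply Finset.sum_le_sum
  intro α _
  split_ifs with h
  · rw [norm_prod]
  · simp only [norm_zero]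
    positivity

lemma stmt8_Abase (M : Fin L₀ → Matrix (Fin N) (Fin N) ℂ)
    (Λ : Finset (Fin L₀)) (r c : Fin L₀ → Fin Q) (B' : ℝ)
    (hent : ∀ ℓ i j, ‖M ℓ i j‖ ≤ B') :
    stmt8Asum M Λ r c ≤ B' ^ Λ.card * (N : ℝ) ^ (Q : ℕ) := by
  have h1 : stmt8Asum M Λ r c ≤ ∑ _α : Fin Q → Fin N, B' ^ Λ.card := by
    apply Finset.sum_le_sum
    intro α _
    calc ∏ ℓ ∈ Λ, ‖M ℓ (α (r ℓ)) (α (c ℓ))‖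
        ≤ ∏ _ℓ ∈ Λ, B' := by
          apply Finset.prod_le_prod
          · intro ℓ _; positivity
          · intro ℓ _; exact hent _ _ _
      _ = B' ^ Λ.card := by rw [Finset.prod_const]
  refine le_trans h1 ?_
  rw [Finset.sum_const, Finset.card_univ, Fintype.card_fun, Fintype.card_fin, Fintype.card_fin,
    nsmul_eq_mul, mul_comm]
  push_cast
  exact le_refl _

lemma stmt8_cs_two {g₀ g₁ : Fin N → ℝ} {B' : ℝ} (h0n : ∀ a, 0 ≤ g₀ a) (h1n : ∀ a, 0 ≤ g₁ a)
    (hB : 0 ≤ B') (h0 : ∑ a, g₀ a ^ 2 ≤ B' ^ 2) (h1 : ∑ a, g₁ a ^ 2 ≤ B' ^ 2) :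
    ∑ a, g₀ a * g₁ a ≤ B' ^ 2 := by
  have hsq : (∑ a, g₀ a * g₁ a) ^ 2 ≤ (B' ^ 2) ^ 2 := by
    calc (∑ a, g₀ a * g₁ a) ^ 2 ≤ (∑ a, g₀ a ^ 2) * (∑ a, g₁ a ^ 2) :=
          Finset.sum_mul_sq_le_sq_mul_sq _ _ _
      _ ≤ (B' ^ 2) ^ 2 := by
          rw [sq]
          apply mul_le_mul h0 h1 (by positivity) (by positivity)
  have h2 := Real.sqrt_le_sqrt hsq
  rwa [Real.sqrt_sq (Finset.sum_nonneg fun a _ => mul_nonneg (h0n a) (h1n a)),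
    Real.sqrt_sq (by positivity)] at h2

lemma stmt8_cs_one {g₀ : Fin N → ℝ} {B' : ℝ} (h0n : ∀ a, 0 ≤ g₀ a)
    (hB : 0 ≤ B') (h0 : ∑ a, g₀ a ^ 2 ≤ B' ^ 2) :
    ∑ a, g₀ a ≤ Real.sqrt N * B' := by
  have hsq : (∑ a, g₀ a) ^ 2 ≤ (N : ℝ) * B' ^ 2 := by
    calc (∑ a, g₀ a) ^ 2 = (∑ a, 1 * g₀ a) ^ 2 := by simp
      _ ≤ (∑ _a : Fin N, (1:ℝ) ^ 2) * (∑ a, g₀ a ^ 2) := Finset.sum_mul_sq_le_sq_mul_sq _ _ _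
      _ ≤ (N : ℝ) * B' ^ 2 := by
          simp only [one_pow, Finset.sum_const, Finset.card_univ, Fintype.card_fin,
            nsmul_eq_mul, mul_one]
          exact mul_le_mul_of_nonneg_left h0 (by positivity)
  have h2 := Real.sqrt_le_sqrt hsq
  rwa [Real.sqrt_sq (Finset.sum_nonneg fun a _ => h0n a),
    Real.sqrt_mul (by positivity), Real.sqrt_sq hB] at h2

lemma stmt8_single_sq (M : Fin L₀ → Matrix (Fin N) (Fin N) ℂ) {B' : ℝ}
    (hcol : ∀ ℓ j, ∑ i, ‖M ℓ i j‖ ^ 2 ≤ B' ^ 2)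
    (hrow : ∀ ℓ i, ∑ j, ‖M ℓ i j‖ ^ 2 ≤ B' ^ 2)
    {r c : Fin L₀ → Fin Q} {v : Fin Q} {ℓ : Fin L₀}
    (h : (r ℓ = v ∧ c ℓ ≠ v) ∨ (c ℓ = v ∧ r ℓ ≠ v)) (α : Fin Q → Fin N) :
    ∑ a, ‖M ℓ (Function.update α v a (r ℓ)) (Function.update α v a (c ℓ))‖ ^ 2
      ≤ B' ^ 2 := by
  rcases h with ⟨hr, hc⟩ | ⟨hc, hr⟩
  · have : ∀ a : Fin N, Function.update α v a (r ℓ) = a ∧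
        Function.update α v a (c ℓ) = α (c ℓ) := by
      intro a
      constructor
      · rw [hr, Function.update_self]
      · rw [Function.update_of_ne hc]
    simp only [fun a => (this a).1, fun a => (this a).2]
    exact hcol ℓ _
  · have : ∀ a : Fin N, Function.update α v a (c ℓ) = a ∧
        Function.update α v a (r ℓ) = α (r ℓ) := by
      intro a
      constructor
      · rw [hc, Function.update_self]
      · rw [Function.update_of_ne hr]
    simp only [fun a => (this a).1, fun a => (this a).2]
    exact hrow ℓ _

lemma stmt8_OFF (hN : 1 ≤ N) (M : Fin L₀ → Matrix (Fin N) (Fin N) ℂ) {B' : ℝ} (hB : 1 ≤ B')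
    (hent : ∀ ℓ i j, ‖M ℓ i j‖ ≤ B')
    (hcol : ∀ ℓ j, ∑ i, ‖M ℓ i j‖ ^ 2 ≤ B' ^ 2)
    (hrow : ∀ ℓ i, ∑ j, ‖M ℓ i j‖ ^ 2 ≤ B' ^ 2) :
    ∀ (g : ℕ) (Λ : Finset (Fin L₀)) (r c : Fin L₀ → Fin Q) (G : Finset (Fin Q))
      (own : Fin Q → Fin L₀),
      G.card = g →
      (∀ v ∈ G, own v ∈ Λ) →
      (∀ v ∈ G, (r (own v) = v ∧ c (own v) ≠ v) ∨ (c (own v) = v ∧ r (own v) ≠ v)) →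
      Set.InjOn own ↑G →
      (∀ v ∈ G, stmt8inc Λ r c v ≤ 2) →
      stmt8Asum M Λ r c ≤ B' ^ Λ.card * (N : ℝ) ^ ((Q : ℝ) - g / 2) := by
  classical
  have hNpos : (0:ℝ) < (N:ℝ) := by exact_mod_cast Nat.lt_of_lt_of_le Nat.zero_lt_one hN
  have hNone : (1:ℝ) ≤ (N:ℝ) := by exact_mod_cast hN
  have hB0 : (0:ℝ) ≤ B' := le_trans zero_le_one hB
  intro g
  induction g using Nat.strong_induction_on with
  | _ g IH =>
  intro Λ r c G own hcard hmem htouch hinj hinc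
  rcases Nat.eq_zero_or_pos g with hg0 | hgpos
  · -- base case
    subst hg0
    have := stmt8_Abase M Λ r c B' hent
    refine le_trans this (le_of_eq ?_)
    congr 1
    rw [show ((Q:ℝ) - (0:ℕ)/2) = (Q:ℕ) by push_cast; ring, Real.rpow_natCast]
  · -- inductive step
    obtain ⟨v, hv⟩ : G.Nonempty := Finset.card_pos.mp (hcard ▸ hgpos)
    set t : Finset (Fin L₀) := Λ.filter (fun ℓ => r ℓ = v ∨ c ℓ = v) with ht
    set Λ' : Finset (Fin L₀) := Λ.filter (fun ℓ => ¬(r ℓ = v ∨ c ℓ = v)) with hΛ'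
    have hvt : own v ∈ t := by
      rw [ht, Finset.mem_filter]
      refine ⟨hmem v hv, ?_⟩
      rcases htouch v hv with ⟨h1, _⟩ | ⟨h1, _⟩
      · exact Or.inl h1
      · exact Or.inr h1
    have htc2 : t.card ≤ 2 := by
      have hsub : t ⊆ (Λ.filter fun ℓ => r ℓ = v) ∪ (Λ.filter fun ℓ => c ℓ = v) := by
        rw [ht, ← Finset.filter_or]
      calc t.card ≤ _ := Finset.card_le_card hsub
        _ ≤ _ := Finset.card_union_le _ _
        _ ≤ 2 := hinc v hv
    have htc1 : 1 ≤ t.card := Finset.card_pos.mpr ⟨own v, hvt⟩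
    -- every member of t touches v exactly once
    have hnd : ∀ ℓ ∈ t, (r ℓ = v ∧ c ℓ ≠ v) ∨ (c ℓ = v ∧ r ℓ ≠ v) := by
      intro ℓ hℓ
      rw [ht, Finset.mem_filter] at hℓ
      by_contra hcon
      push_neg at hcon
      -- then r ℓ = v ∧ c ℓ = v
      have hdiag : r ℓ = v ∧ c ℓ = v := by
        rcases hℓ.2 with h | h
        · exact ⟨h, hcon.1 h⟩
        · exact ⟨hcon.2 h, h⟩
      have hℓown : ℓ ≠ own v := by
        intro he
        rcases htouch v hv with ⟨_, h2⟩ | ⟨_, h2⟩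
        · exact h2 (he ▸ hdiag.2)
        · exact h2 (he ▸ hdiag.1)
      -- incidence count at least 3
      have h3 : 3 ≤ stmt8inc Λ r c v := by
        have hrin : ℓ ∈ Λ.filter (fun ℓ => r ℓ = v) := Finset.mem_filter.mpr ⟨hℓ.1, hdiag.1⟩
        have hcin : ℓ ∈ Λ.filter (fun ℓ => c ℓ = v) := Finset.mem_filter.mpr ⟨hℓ.1, hdiag.2⟩
        rcases htouch v hv with ⟨h1, _⟩ | ⟨h1, _⟩
        · have hpair : ({ℓ, own v} : Finset (Fin L₀)) ⊆ Λ.filter (fun ℓ => r ℓ = v) := by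
            intro x hx
            rcases Finset.mem_insert.mp hx with hx | hx
            · exact hx ▸ hrin
            · rw [Finset.mem_singleton.mp hx]
              exact Finset.mem_filter.mpr ⟨hmem v hv, h1⟩
          have h2le : 2 ≤ (Λ.filter (fun ℓ => r ℓ = v)).card := by
            calc 2 = ({ℓ, own v} : Finset (Fin L₀)).card := (Finset.card_pair hℓown).symm
              _ ≤ _ := Finset.card_le_card hpair
          have h1le : 1 ≤ (Λ.filter (fun ℓ => c ℓ = v)).card :=
            Finset.card_pos.mpr ⟨ℓ, hcin⟩
          unfold stmt8inc
          omega
        · have hpair : ({ℓ, own v} : Finset (Fin L₀)) ⊆ Λ.filter (fun ℓ => c ℓ = v) := by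
            intro x hx
            rcases Finset.mem_insert.mp hx with hx | hx
            · exact hx ▸ hcin
            · rw [Finset.mem_singleton.mp hx]
              exact Finset.mem_filter.mpr ⟨hmem v hv, h1⟩
          have h2le : 2 ≤ (Λ.filter (fun ℓ => c ℓ = v)).card := by
            calc 2 = ({ℓ, own v} : Finset (Fin L₀)).card := (Finset.card_pair hℓown).symm
              _ ≤ _ := Finset.card_le_card hpair
          have h1le : 1 ≤ (Λ.filter (fun ℓ => r ℓ = v)).card :=
            Finset.card_pos.mpr ⟨ℓ, hrin⟩
          unfold stmt8inc
          omega
      have := hinc v hv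
      omega
    -- main peel inequality, for any uniform inner bound D
    have hmain : ∀ D : ℝ, (∀ α : Fin Q → Fin N,
        ∑ a, ∏ ℓ ∈ t, ‖M ℓ (Function.update α v a (r ℓ)) (Function.update α v a (c ℓ))‖ ≤ D) →
        (N:ℝ) * stmt8Asum M Λ r c ≤ D * stmt8Asum M Λ' r c := by
      intro D hD
      have hidentity : (N:ℝ) * stmt8Asum M Λ r c
          = ∑ α : Fin Q → Fin N, ∑ a : Fin N,
              ∏ ℓ ∈ Λ, ‖M ℓ (Function.update α v a (r ℓ)) (Function.update α v a (c ℓ))‖ := by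
        rw [stmt8_sum_sum_update
          (fun α => ∏ ℓ ∈ Λ, ‖M ℓ (α (r ℓ)) (α (c ℓ))‖) v, nsmul_eq_mul]
        rfl
      rw [hidentity]
      have hsplit : ∀ α : Fin Q → Fin N, ∑ a : Fin N,
          ∏ ℓ ∈ Λ, ‖M ℓ (Function.update α v a (r ℓ)) (Function.update α v a (c ℓ))‖
          = (∑ a, ∏ ℓ ∈ t, ‖M ℓ (Function.update α v a (r ℓ)) (Function.update α v a (c ℓ))‖)
            * ∏ ℓ ∈ Λ', ‖M ℓ (α (r ℓ)) (α (c ℓ))‖ := by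
        intro α
        rw [Finset.sum_mul]
        apply Finset.sum_congr rfl
        intro a _
        rw [← Finset.prod_filter_mul_prod_filter_not Λ (fun ℓ => r ℓ = v ∨ c ℓ = v)]
        congr 1
        apply Finset.prod_congr rfl
        intro ℓ hℓ
        have hℓ' := (Finset.mem_filter.mp hℓ).2
        push_neg at hℓ'
        rw [Function.update_of_ne hℓ'.1, Function.update_of_ne hℓ'.2]
      calc ∑ α : Fin Q → Fin N, ∑ a : Fin N,
            ∏ ℓ ∈ Λ, ‖M ℓ (Function.update α v a (r ℓ)) (Function.update α v a (c ℓ))‖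
          ≤ ∑ α : Fin Q → Fin N,
              D * ∏ ℓ ∈ Λ', ‖M ℓ (α (r ℓ)) (α (c ℓ))‖ := by
            apply Finset.sum_le_sum
            intro α _
            rw [hsplit α]
            apply mul_le_mul_of_nonneg_right (hD α)
            positivity
        _ = D * stmt8Asum M Λ' r c := by
            rw [← Finset.mul_sum]; rfl
    -- facts about the new good set
    set G' : Finset (Fin Q) :=
      (G.erase v).filter (fun w => ¬(r (own w) = v ∨ c (own w) = v)) with hG'def
    have hG'sub : G' ⊆ G := by
      intro w hw
      exact Finset.mem_of_mem_erase (Finset.mem_of_mem_filter w hw)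
    have hG'lt : G'.card < g := by
      calc G'.card ≤ (G.erase v).card := Finset.card_le_card (Finset.filter_subset _ _)
        _ = g - 1 := by rw [Finset.card_erase_of_mem hv, hcard]
        _ < g := by omega
    have hG'ge : g ≤ G'.card + t.card := by
      have hsplit2 := Finset.card_filter_add_card_filter_not
        (s := G.erase v) (p := fun w => (r (own w) = v ∨ c (own w) = v))
      have hrem : ((G.erase v).filter (fun w => (r (own w) = v ∨ c (own w) = v))).card
          ≤ (t.erase (own v)).card := by
        apply Finset.card_le_card_of_injOn own
        · intro w hw
          rw [Finset.mem_coe, Finset.mem_filter] at hw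
          rw [Finset.mem_coe]
          have hwG : w ∈ G := Finset.mem_of_mem_erase hw.1
          refine Finset.mem_erase.mpr ⟨?_, ?_⟩
          · intro he
            have : w = v := hinj (hwG) hv (by rw [he])
            exact (Finset.mem_erase.mp hw.1).1 this
          · exact Finset.mem_filter.mpr ⟨hmem w hwG, hw.2⟩
        · intro x hx y hy hxy
          exact hinj (Finset.mem_coe.mpr (Finset.mem_of_mem_erase (Finset.mem_of_mem_filter _ hx)))
            (Finset.mem_coe.mpr (Finset.mem_of_mem_erase (Finset.mem_of_mem_filter _ hy))) hxy
      have hte : (t.erase (own v)).card = t.card - 1 := Finset.card_erase_of_mem hvt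
      have hge : (G.erase v).card = g - 1 := by rw [Finset.card_erase_of_mem hv, hcard]
      rw [← hG'def] at hsplit2
      omega
    -- apply the induction hypothesis
    have hIH : stmt8Asum M Λ' r c ≤ B' ^ Λ'.card * (N : ℝ) ^ ((Q : ℝ) - G'.card / 2) := by
      apply IH G'.card hG'lt Λ' r c G' own rfl
      · intro w hw
        have hw2 := (Finset.mem_filter.mp hw).2
        exact Finset.mem_filter.mpr ⟨hmem w (hG'sub hw), hw2⟩
      · intro w hw; exact htouch w (hG'sub hw)
      · exact hinj.mono (Finset.coe_subset.mpr hG'sub)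
      · intro w hw
        have h1 : Λ' ⊆ Λ := Finset.filter_subset _ _
        have h2 : stmt8inc Λ' r c w ≤ stmt8inc Λ r c w := by
          unfold stmt8inc
          exact Nat.add_le_add
            (Finset.card_le_card (Finset.filter_subset_filter _ h1))
            (Finset.card_le_card (Finset.filter_subset_filter _ h1))
        exact le_trans h2 (hinc w (hG'sub hw))
    have hΛcards : Λ'.card + t.card = Λ.card := by
      rw [hΛ', ht]
      rw [add_comm]
      exact Finset.card_filter_add_card_filter_not _
    have htsub : t ⊆ Λ := Finset.filter_subset _ _
    -- case split on t.card
    have hcase : t.card = 1 ∨ t.card = 2 := by omega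
    have hNrw : ∀ x : ℝ, (N:ℝ) * ((N:ℝ) ^ x) = (N:ℝ) ^ (x + 1) := by
      intro x
      rw [Real.rpow_add hNpos, Real.rpow_one, mul_comm]
    rcases hcase with hc1 | hc2
    · -- single entry case
      obtain ⟨ℓ₀, hℓ₀⟩ := Finset.card_eq_one.mp hc1
      have hownv : ℓ₀ = own v := by
        have := hvt
        rw [hℓ₀, Finset.mem_singleton] at this
        exact this.symm
      have hD : ∀ α : Fin Q → Fin N,
          ∑ a, ∏ ℓ ∈ t, ‖M ℓ (Function.update α v a (r ℓ)) (Function.update α v a (c ℓ))‖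
          ≤ Real.sqrt N * B' := by
        intro α
        rw [hℓ₀]
        simp only [Finset.prod_singleton]
        apply stmt8_cs_one (fun a => norm_nonneg _) hB0
        exact stmt8_single_sq M hcol hrow (hnd ℓ₀ (hℓ₀ ▸ Finset.mem_singleton_self ℓ₀)) α
      have h1 := le_trans (hmain _ hD)
        (mul_le_mul_of_nonneg_left hIH (by positivity))
      have hgle : (g:ℝ) ≤ (G'.card : ℝ) + 1 := by
        have := hG'ge
        rw [hc1] at this
        exact_mod_cast this
      rw [← mul_le_mul_iff_right₀ hNpos]
      refine le_trans h1 ?_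
      calc Real.sqrt N * B' * (B' ^ Λ'.card * (N:ℝ) ^ ((Q:ℝ) - G'.card/2))
          = B' ^ Λ.card * ((N:ℝ) ^ ((1:ℝ)/2) * (N:ℝ) ^ ((Q:ℝ) - G'.card/2)) := by
            rw [Real.sqrt_eq_rpow, ← hΛcards, hc1, pow_succ]
            ring
        _ = B' ^ Λ.card * (N:ℝ) ^ ((1:ℝ)/2 + ((Q:ℝ) - G'.card/2)) := by
            rw [← Real.rpow_add hNpos]
        _ ≤ B' ^ Λ.card * (N:ℝ) ^ (((Q:ℝ) - g/2) + 1) := by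
            apply mul_le_mul_of_nonneg_left _ (by positivity)
            apply Real.rpow_le_rpow_of_exponent_le hNone
            linarith
        _ = (N:ℝ) * (B' ^ Λ.card * (N:ℝ) ^ ((Q:ℝ) - g/2)) := by
            rw [← hNrw]
            ring
    · -- two entry case (Cauchy-Schwarz)
      obtain ⟨ℓ₀, ℓ₁, hne01, hℓ₀₁⟩ := Finset.card_eq_two.mp hc2
      have hD : ∀ α : Fin Q → Fin N,
          ∑ a, ∏ ℓ ∈ t, ‖M ℓ (Function.update α v a (r ℓ)) (Function.update α v a (c ℓ))‖
          ≤ B' ^ 2 := by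
        intro α
        have hm0 : ℓ₀ ∈ t := by rw [hℓ₀₁]; exact Finset.mem_insert_self _ _
        have hm1 : ℓ₁ ∈ t := by
          rw [hℓ₀₁]; exact Finset.mem_insert_of_mem (Finset.mem_singleton_self _)
        have hprodpair : ∀ a : Fin N, ∏ ℓ ∈ t, ‖M ℓ (Function.update α v a (r ℓ)) (Function.update α v a (c ℓ))‖
            = ‖M ℓ₀ (Function.update α v a (r ℓ₀)) (Function.update α v a (c ℓ₀))‖
              * ‖M ℓ₁ (Function.update α v a (r ℓ₁)) (Function.update α v a (c ℓ₁))‖ := by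
          intro a
          rw [hℓ₀₁, Finset.prod_pair hne01]
        simp only [hprodpair]
        apply stmt8_cs_two (fun a => norm_nonneg _) (fun a => norm_nonneg _) hB0
        · exact stmt8_single_sq M hcol hrow (hnd ℓ₀ hm0) α
        · exact stmt8_single_sq M hcol hrow (hnd ℓ₁ hm1) α
      have h1 := le_trans (hmain _ hD)
        (mul_le_mul_of_nonneg_left hIH (by positivity))
      have hgle : (g:ℝ) ≤ (G'.card : ℝ) + 2 := by
        have := hG'ge
        rw [hc2] at this
        exact_mod_cast this
      rw [← mul_le_mul_iff_right₀ hNpos]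
      refine le_trans h1 ?_
      calc B' ^ 2 * (B' ^ Λ'.card * (N:ℝ) ^ ((Q:ℝ) - G'.card/2))
          = B' ^ Λ.card * (N:ℝ) ^ ((Q:ℝ) - G'.card/2) := by
            rw [← hΛcards, hc2]
            ring
        _ ≤ B' ^ Λ.card * (N:ℝ) ^ (((Q:ℝ) - g/2) + 1) := by
            apply mul_le_mul_of_nonneg_left _ (by positivity)
            apply Real.rpow_le_rpow_of_exponent_le hNone
            linarith
        _ = (N:ℝ) * (B' ^ Λ.card * (N:ℝ) ^ ((Q:ℝ) - g/2)) := by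
            rw [← hNrw]
            ring

lemma stmt8_Hall (M : Fin L₀ → Matrix (Fin N) (Fin N) ℂ) (Λ : Finset (Fin L₀))
    (r c : Fin L₀ → Fin Q) (hne : (stmt8T M Λ r c).Nonempty)
    (hnd : ∀ v ∈ stmt8T M Λ r c, ∀ ℓ ∈ Λ, ¬(r ℓ = v ∧ c ℓ = v)) :
    ∃ own : Fin Q → Fin L₀,
      (∀ v ∈ stmt8T M Λ r c, own v ∈ Λ) ∧
      (∀ v ∈ stmt8T M Λ r c,
        (r (own v) = v ∧ c (own v) ≠ v) ∨ (c (own v) = v ∧ r (own v) ≠ v)) ∧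
      Set.InjOn own ↑(stmt8T M Λ r c) := by
  classical
  set T := stmt8T M Λ r c with hT
  set t' : {v // v ∈ T} → Finset (Fin L₀) :=
    fun v => Λ.filter (fun ℓ => r ℓ = v.1 ∨ c ℓ = v.1) with ht'
  have htcard : ∀ v : {v // v ∈ T}, (t' v).card = 2 := by
    intro v
    have hv' : (v : Fin Q) ∈ Finset.univ.filter (fun u => stmt8inc Λ r c u = 2 ∧
        ∀ ℓ ∈ Λ, r ℓ = u → c ℓ = u → (M ℓ).trace = 0) := v.2
    have hinc := (Finset.mem_filter.mp hv').2.1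
    have hdisj : Disjoint (Λ.filter fun ℓ => r ℓ = v.1) (Λ.filter fun ℓ => c ℓ = v.1) := by
      rw [Finset.disjoint_left]
      intro ℓ h1 h2
      rw [Finset.mem_filter] at h1 h2
      exact hnd v.1 v.2 ℓ h1.1 ⟨h1.2, h2.2⟩
    have : t' v = (Λ.filter fun ℓ => r ℓ = v.1) ∪ (Λ.filter fun ℓ => c ℓ = v.1) := by
      rw [ht', ← Finset.filter_or]
    rw [this, Finset.card_union_of_disjoint hdisj]
    exact hinc
  have hall : ∀ s : Finset {v // v ∈ T}, s.card ≤ (s.biUnion t').card := by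
    intro s
    have hcount : ∀ v ∈ s, (t' v).card = ∑ ℓ ∈ s.biUnion t', (if ℓ ∈ t' v then 1 else 0) := by
      intro v hv
      have hsub : t' v ⊆ s.biUnion t' := Finset.subset_biUnion_of_mem t' hv
      have heq : (s.biUnion t').filter (· ∈ t' v) = t' v := by
        ext ℓ
        rw [Finset.mem_filter]
        exact ⟨fun h => h.2, fun h => ⟨hsub h, h⟩⟩
      calc (t' v).card = ((s.biUnion t').filter (· ∈ t' v)).card := by rw [heq]
        _ = ∑ ℓ ∈ s.biUnion t', (if ℓ ∈ t' v then 1 else 0) := Finset.card_filter _ _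
    have hdouble : ∑ v ∈ s, (t' v).card ≤ 2 * (s.biUnion t').card := by
      calc ∑ v ∈ s, (t' v).card
          = ∑ v ∈ s, ∑ ℓ ∈ s.biUnion t', (if ℓ ∈ t' v then 1 else 0) :=
            Finset.sum_congr rfl hcount
        _ = ∑ ℓ ∈ s.biUnion t', ∑ v ∈ s, (if ℓ ∈ t' v then 1 else 0) := Finset.sum_comm
        _ ≤ ∑ _ℓ ∈ s.biUnion t', 2 := by
            apply Finset.sum_le_sum
            intro ℓ _
            rw [← Finset.card_filter]
            have hinj2 : (s.filter (fun v => ℓ ∈ t' v)).card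
                ≤ ({r ℓ, c ℓ} : Finset (Fin Q)).card := by
              apply Finset.card_le_card_of_injOn (fun v => v.1)
              · intro x hx
                have hx2 := (Finset.mem_filter.mp hx).2
                rw [ht', Finset.mem_filter] at hx2
                rcases hx2.2 with h | h
                · exact Finset.mem_insert.mpr (Or.inl h.symm)
                · exact Finset.mem_insert.mpr (Or.inr (Finset.mem_singleton.mpr h.symm))
              · intro x _ y _ hxy
                exact Subtype.ext hxy
            calc (s.filter (fun v => ℓ ∈ t' v)).card ≤ _ := hinj2
              _ ≤ 2 := by
                calc ({r ℓ, c ℓ} : Finset (Fin Q)).card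
                    ≤ ({c ℓ} : Finset (Fin Q)).card + 1 := Finset.card_insert_le _ _
                  _ ≤ 2 := by rw [Finset.card_singleton]
        _ = 2 * (s.biUnion t').card := by
            rw [Finset.sum_const, smul_eq_mul]
            omega
    have hsum2 : ∑ v ∈ s, (t' v).card = 2 * s.card := by
      rw [Finset.sum_congr rfl (fun v _ => htcard v), Finset.sum_const, smul_eq_mul]
      omega
    omega
  obtain ⟨f, hfinj, hfmem⟩ :=
    (Finset.all_card_le_biUnion_card_iff_existsInjective' t').mp hall
  obtain ⟨v₀, hv₀⟩ := hne
  refine ⟨fun u => if h : u ∈ T then f ⟨u, h⟩ else f ⟨v₀, hv₀⟩, ?_, ?_, ?_⟩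
  · intro v hv
    simp only [dif_pos hv]
    exact (Finset.mem_filter.mp (hfmem ⟨v, hv⟩)).1
  · intro v hv
    simp only [dif_pos hv]
    have hmem := Finset.mem_filter.mp (hfmem ⟨v, hv⟩)
    have hnodiag := hnd v hv _ hmem.1
    rcases hmem.2 with h | h
    · exact Or.inl ⟨h, fun hc => hnodiag ⟨h, hc⟩⟩
    · exact Or.inr ⟨h, fun hc => hnodiag ⟨hc, h⟩⟩
  · intro x hx y hy hxy
    rw [Finset.mem_coe] at hx hy
    simp only [dif_pos hx, dif_pos hy] at hxy
    have := hfinj hxy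
    exact congrArg Subtype.val this

lemma stmt8_key (M : Fin L₀ → Matrix (Fin N) (Fin N) ℂ) (A : Finset (Fin Q))
    (Λ : Finset (Fin L₀)) (r c : Fin L₀ → Fin Q) (v : Fin Q) (ℓv : Fin L₀)
    (hvA : v ∈ A) (hℓΛ : ℓv ∈ Λ) (hrv : r ℓv = v) (hcv : c ℓv = v)
    (htr : (M ℓv).trace = 0)
    (honly : ∀ ℓ ∈ Λ, ℓ ≠ ℓv → r ℓ ≠ v ∧ c ℓ ≠ v) :
    (N:ℂ) * stmt8Vsum M A Λ r c
      = -∑ w ∈ A.erase v, stmt8Vsum M (A.erase v) Λ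
          (Function.update r ℓv w) (Function.update c ℓv w) := by
  classical
  set E := A.erase v with hE
  set P : (Fin Q → Fin N) → ℂ := fun α => ∏ ℓ ∈ Λ.erase ℓv, M ℓ (α (r ℓ)) (α (c ℓ)) with hP
  -- Step A
  have stepA : ∀ (α : Fin Q → Fin N) (a : Fin N),
      (if Set.InjOn (Function.update α v a) ↑A then
          ∏ ℓ ∈ Λ, M ℓ (Function.update α v a (r ℓ)) (Function.update α v a (c ℓ))
        else 0)
      = if (Set.InjOn α ↑E ∧ ∀ w ∈ E, α w ≠ a) then P α * M ℓv a a else 0 := by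
    intro α a
    have hiff : Set.InjOn (Function.update α v a) ↑A
        ↔ (Set.InjOn α ↑E ∧ ∀ w ∈ E, α w ≠ a) := by
      constructor
      · intro h
        constructor
        · intro x hx y hy hxy
          rw [Finset.mem_coe, hE, Finset.mem_erase] at hx hy
          have hx' : Function.update α v a x = α x := Function.update_of_ne hx.1 _ _
          have hy' : Function.update α v a y = α y := Function.update_of_ne hy.1 _ _
          exact h (Finset.mem_coe.mpr hx.2) (Finset.mem_coe.mpr hy.2) (by rw [hx', hy', hxy])
        · intro w hw hwa
          rw [hE, Finset.mem_erase] at hw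
          have h1 : Function.update α v a w = α w := Function.update_of_ne hw.1 _ _
          have h2 : Function.update α v a v = a := Function.update_self _ _ _
          have := h (Finset.mem_coe.mpr hw.2) (Finset.mem_coe.mpr hvA) (by rw [h1, h2, hwa])
          exact hw.1 this
      · rintro ⟨h1, h2⟩
        intro x hx y hy hxy
        rw [Finset.mem_coe] at hx hy
        by_cases hxv : x = v
        · by_cases hyv : y = v
          · rw [hxv, hyv]
          · exfalso
            rw [hxv, Function.update_self, Function.update_of_ne hyv] at hxy
            exact h2 y (Finset.mem_erase.mpr ⟨hyv, hy⟩) hxy.symm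
        · by_cases hyv : y = v
          · exfalso
            rw [hyv, Function.update_self, Function.update_of_ne hxv] at hxy
            exact h2 x (Finset.mem_erase.mpr ⟨hxv, hx⟩) hxy
          · rw [Function.update_of_ne hxv, Function.update_of_ne hyv] at hxy
            exact h1 (Finset.mem_coe.mpr (Finset.mem_erase.mpr ⟨hxv, hx⟩))
              (Finset.mem_coe.mpr (Finset.mem_erase.mpr ⟨hyv, hy⟩)) hxy
    have hprod : ∏ ℓ ∈ Λ, M ℓ (Function.update α v a (r ℓ)) (Function.update α v a (c ℓ))
        = P α * M ℓv a a := by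
      rw [← Finset.prod_erase_mul Λ _ hℓΛ]
      congr 1
      · apply Finset.prod_congr rfl
        intro ℓ hℓ
        have hℓ' := Finset.mem_erase.mp hℓ
        have hne := honly ℓ hℓ'.2 hℓ'.1
        rw [Function.update_of_ne hne.1, Function.update_of_ne hne.2]
      · rw [hrv, hcv, Function.update_self]
    rw [hprod]
    by_cases h : Set.InjOn (Function.update α v a) ↑A
    · rw [if_pos h, if_pos (hiff.mp h)]
    · rw [if_neg h, if_neg (fun hc => h (hiff.mpr hc))]
  -- Step B
  have stepB : ∀ α : Fin Q → Fin N,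
      ∑ a : Fin N, (if (Set.InjOn α ↑E ∧ ∀ w ∈ E, α w ≠ a) then P α * M ℓv a a else 0)
      = -∑ w ∈ E, (if Set.InjOn α ↑E then P α * M ℓv (α w) (α w) else 0) := by
    intro α
    by_cases hC : Set.InjOn α ↑E
    · have hL : ∀ a : Fin N, (if (Set.InjOn α ↑E ∧ ∀ w ∈ E, α w ≠ a) then P α * M ℓv a a else 0)
          = if a ∈ E.image α then 0 else P α * M ℓv a a := by
        intro a
        by_cases hmem : a ∈ E.image α
        · rw [if_neg, if_pos hmem]
          rintro ⟨-, h2⟩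
          obtain ⟨w, hw, hwa⟩ := Finset.mem_image.mp hmem
          exact h2 w hw hwa
        · rw [if_pos, if_neg hmem]
          refine ⟨hC, fun w hw hwa => hmem (Finset.mem_image.mpr ⟨w, hw, hwa⟩)⟩
      simp only [hL]
      have e1 : ∀ x : Fin N, (if x ∈ E.image α then 0 else P α * M ℓv x x)
          = P α * M ℓv x x - (if x ∈ E.image α then P α * M ℓv x x else 0) := by
        intro x
        by_cases h : x ∈ E.image α <;> simp [h]
      simp only [e1]
      rw [Finset.sum_sub_distrib]
      have e2 : ∑ x : Fin N, P α * M ℓv x x = 0 := by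
        rw [← Finset.mul_sum]
        have e3 : ∑ x : Fin N, M ℓv x x = (M ℓv).trace := by
          simp [Matrix.trace, Matrix.diag]
        rw [e3, htr, mul_zero]
      rw [e2, zero_sub, Finset.sum_ite_mem, Finset.univ_inter, neg_inj,
        Finset.sum_image (fun x hx y hy hxy => hC (Finset.mem_coe.mpr hx) (Finset.mem_coe.mpr hy) hxy)]
      apply Finset.sum_congr rfl
      intro w _
      rw [if_pos hC]
    · have h1 : ∀ a : Fin N,
          (if (Set.InjOn α ↑E ∧ ∀ w ∈ E, α w ≠ a) then P α * M ℓv a a else 0) = 0 := by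
        intro a
        rw [if_neg]
        rintro ⟨h, -⟩
        exact hC h
      simp only [h1, Finset.sum_const_zero]
      simp only [if_neg hC, Finset.sum_const_zero, neg_zero]
  -- Step C: assemble
  have hsum := stmt8_sum_sum_update
    (S := fun α : Fin Q → Fin N =>
      if Set.InjOn α ↑A then ∏ ℓ ∈ Λ, M ℓ (α (r ℓ)) (α (c ℓ)) else 0) v
  have hN1 : (N:ℂ) * stmt8Vsum M A Λ r c
      = ∑ α : Fin Q → Fin N, ∑ a : Fin N,
          (if Set.InjOn (Function.update α v a) ↑A then
            ∏ ℓ ∈ Λ, M ℓ (Function.update α v a (r ℓ)) (Function.update α v a (c ℓ))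
          else 0) := by
    rw [← nsmul_eq_mul]
    exact hsum.symm
  rw [hN1]
  simp only [stepA]
  simp only [stepB]
  rw [Finset.sum_neg_distrib, neg_inj, Finset.sum_comm]
  apply Finset.sum_congr rfl
  intro w _
  unfold stmt8Vsum
  apply Finset.sum_congr rfl
  intro α _
  by_cases hC : Set.InjOn α ↑E
  · rw [if_pos hC, if_pos hC]
    rw [← Finset.prod_erase_mul Λ _ hℓΛ]
    congr 1
    · apply Finset.prod_congr rfl
      intro ℓ hℓ
      have hℓ' := Finset.mem_erase.mp hℓ
      rw [Function.update_of_ne hℓ'.1, Function.update_of_ne hℓ'.1]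
    · rw [Function.update_self, Function.update_self]
  · rw [if_neg hC, if_neg hC]

lemma stmt8_D_nodiag (hN : 1 ≤ N) (M : Fin L₀ → Matrix (Fin N) (Fin N) ℂ) {B' : ℝ} (hB : 1 ≤ B')
    (hent : ∀ ℓ i j, ‖M ℓ i j‖ ≤ B')
    (hcol : ∀ ℓ j, ∑ i, ‖M ℓ i j‖ ^ 2 ≤ B' ^ 2)
    (hrow : ∀ ℓ i, ∑ j, ‖M ℓ i j‖ ^ 2 ≤ B' ^ 2)
    (A : Finset (Fin Q)) (Λ : Finset (Fin L₀)) (r c : Fin L₀ → Fin Q)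
    (hnd : ∀ v ∈ stmt8T M Λ r c, ∀ ℓ ∈ Λ, ¬(r ℓ = v ∧ c ℓ = v)) :
    ‖stmt8Vsum M A Λ r c‖
      ≤ B' ^ Λ.card * (N:ℝ) ^ ((Q:ℝ) - (stmt8T M Λ r c).card / 2) := by
  classical
  refine le_trans (stmt8_V_le_A M A Λ r c) ?_
  rcases Finset.eq_empty_or_nonempty (stmt8T M Λ r c) with hemp | hne
  · rw [hemp]
    refine le_trans (stmt8_Abase M Λ r c B' hent) (le_of_eq ?_)
    congr 1
    rw [show ((Q:ℝ) - ((∅ : Finset (Fin Q)).card : ℝ)/2) = ((Q:ℕ) : ℝ) by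
      simp, Real.rpow_natCast]
  · obtain ⟨own, hmem, htouch, hinj⟩ := stmt8_Hall M Λ r c hne hnd
    exact stmt8_OFF hN M hB hent hcol hrow (stmt8T M Λ r c).card Λ r c
      (stmt8T M Λ r c) own rfl hmem htouch hinj
      (fun v hv => le_of_eq (Finset.mem_filter.mp hv).2.1)

lemma stmt8_D (hN : 1 ≤ N) (M : Fin L₀ → Matrix (Fin N) (Fin N) ℂ) {B' : ℝ} (hB : 1 ≤ B')
    (hent : ∀ ℓ i j, ‖M ℓ i j‖ ≤ B')
    (hcol : ∀ ℓ j, ∑ i, ‖M ℓ i j‖ ^ 2 ≤ B' ^ 2)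
    (hrow : ∀ ℓ i, ∑ j, ‖M ℓ i j‖ ^ 2 ≤ B' ^ 2) :
    ∀ (k : ℕ) (A : Finset (Fin Q)) (Λ : Finset (Fin L₀)) (r c : Fin L₀ → Fin Q),
      A.card ≤ k → (∀ ℓ ∈ Λ, r ℓ ∈ A ∧ c ℓ ∈ A) →
      ‖stmt8Vsum M A Λ r c‖
        ≤ ((Q:ℝ)+1)^k * B'^Λ.card * (N:ℝ)^((Q:ℝ) - (stmt8T M Λ r c).card/2) := by
  classical
  have hNpos : (0:ℝ) < (N:ℝ) := by exact_mod_cast Nat.lt_of_lt_of_le Nat.zero_lt_one hN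
  have hNone : (1:ℝ) ≤ (N:ℝ) := by exact_mod_cast hN
  have hB0 : (0:ℝ) ≤ B' := le_trans zero_le_one hB
  have hQ1 : (1:ℝ) ≤ (Q:ℝ)+1 := by
    have : (0:ℝ) ≤ (Q:ℝ) := Nat.cast_nonneg Q
    linarith
  intro k
  induction k with
  | zero =>
    intro A Λ r c hk hcoord
    by_cases hdg : ∃ v ∈ stmt8T M Λ r c, ∃ ℓ ∈ Λ, r ℓ = v ∧ c ℓ = v
    · exfalso
      obtain ⟨v, hvT, ℓv, hℓΛ, hrv, hcv⟩ := hdg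
      have hvA : v ∈ A := hrv ▸ (hcoord ℓv hℓΛ).1
      have : A = ∅ := Finset.card_eq_zero.mp (Nat.le_zero.mp hk)
      rw [this] at hvA
      exact absurd hvA (Finset.notMem_empty v)
    · push_neg at hdg
      refine le_trans (stmt8_D_nodiag hN M hB hent hcol hrow A Λ r c
        (fun v hv ℓ hℓ h => hdg v hv ℓ hℓ h.1 h.2)) ?_
      rw [pow_zero, one_mul]
  | succ k' IH =>
    intro A Λ r c hk hcoord
    by_cases hdg : ∃ v ∈ stmt8T M Λ r c, ∃ ℓ ∈ Λ, r ℓ = v ∧ c ℓ = v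
    · obtain ⟨v, hvT, ℓv, hℓΛ, hrv, hcv⟩ := hdg
      have hvA : v ∈ A := hrv ▸ (hcoord ℓv hℓΛ).1
      have hvmem := Finset.mem_filter.mp hvT
      have hinc2 : stmt8inc Λ r c v = 2 := hvmem.2.1
      have htr : (M ℓv).trace = 0 := hvmem.2.2 ℓv hℓΛ hrv hcv
      -- r-filter and c-filter at v are both {ℓv}
      have hfr : Λ.filter (fun ℓ => r ℓ = v) = {ℓv} := by
        have hsub : ({ℓv} : Finset (Fin L₀)) ⊆ Λ.filter (fun ℓ => r ℓ = v) := by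
          intro x hx
          rw [Finset.mem_singleton] at hx
          exact hx ▸ Finset.mem_filter.mpr ⟨hℓΛ, hrv⟩
        have hsubc : ({ℓv} : Finset (Fin L₀)) ⊆ Λ.filter (fun ℓ => c ℓ = v) := by
          intro x hx
          rw [Finset.mem_singleton] at hx
          exact hx ▸ Finset.mem_filter.mpr ⟨hℓΛ, hcv⟩
        have h1 : 1 ≤ (Λ.filter (fun ℓ => r ℓ = v)).card :=
          le_trans (by rw [Finset.card_singleton]) (Finset.card_le_card hsub)
        have h2 : 1 ≤ (Λ.filter (fun ℓ => c ℓ = v)).card :=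
          le_trans (by rw [Finset.card_singleton]) (Finset.card_le_card hsubc)
        have := hinc2
        unfold stmt8inc at this
        refine (Finset.eq_of_subset_of_card_le hsub ?_).symm
        rw [Finset.card_singleton]
        omega
      have hfc : Λ.filter (fun ℓ => c ℓ = v) = {ℓv} := by
        have hsub : ({ℓv} : Finset (Fin L₀)) ⊆ Λ.filter (fun ℓ => c ℓ = v) := by
          intro x hx
          rw [Finset.mem_singleton] at hx
          exact hx ▸ Finset.mem_filter.mpr ⟨hℓΛ, hcv⟩
        have h1 : 1 ≤ (Λ.filter (fun ℓ => r ℓ = v)).card := by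
          rw [hfr, Finset.card_singleton]
        have := hinc2
        unfold stmt8inc at this
        refine (Finset.eq_of_subset_of_card_le hsub ?_).symm
        rw [Finset.card_singleton]
        omega
      have honly : ∀ ℓ ∈ Λ, ℓ ≠ ℓv → r ℓ ≠ v ∧ c ℓ ≠ v := by
        intro ℓ hℓ hne
        constructor
        · intro h
          have : ℓ ∈ Λ.filter (fun ℓ => r ℓ = v) := Finset.mem_filter.mpr ⟨hℓ, h⟩
          rw [hfr, Finset.mem_singleton] at this
          exact hne this
        · intro h
          have : ℓ ∈ Λ.filter (fun ℓ => c ℓ = v) := Finset.mem_filter.mpr ⟨hℓ, h⟩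
          rw [hfc, Finset.mem_singleton] at this
          exact hne this
      -- the key identity
      have hkey := stmt8_key M A Λ r c v ℓv hvA hℓΛ hrv hcv htr honly
      -- bound each term
      have hterm : ∀ w ∈ A.erase v,
          ‖stmt8Vsum M (A.erase v) Λ
            (Function.update r ℓv w) (Function.update c ℓv w)‖
          ≤ ((Q:ℝ)+1)^k' * B'^Λ.card * (N:ℝ)^(((Q:ℝ) - (stmt8T M Λ r c).card/2) + 1) := by
        intro w hw
        have hIH := IH (A.erase v) Λ (Function.update r ℓv w) (Function.update c ℓv w)
          (by
            have := Finset.card_erase_of_mem hvA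
            omega)
          (by
            intro ℓ hℓ
            by_cases he : ℓ = ℓv
            · subst he
              rw [Function.update_self, Function.update_self]
              exact ⟨hw, hw⟩
            · rw [Function.update_of_ne he, Function.update_of_ne he]
              have h1 := hcoord ℓ hℓ
              have h2 := honly ℓ hℓ he
              exact ⟨Finset.mem_erase.mpr ⟨h2.1, h1.1⟩, Finset.mem_erase.mpr ⟨h2.2, h1.2⟩⟩)
        refine le_trans hIH ?_
        apply mul_le_mul_of_nonneg_left _ (by positivity)
        apply Real.rpow_le_rpow_of_exponent_le hNone
        -- T.card ≤ T_w.card + 2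
        have hTsub : stmt8T M Λ r c ⊆
            (stmt8T M Λ (Function.update r ℓv w) (Function.update c ℓv w)) ∪ {v, w} := by
          intro u hu
          by_cases huv : u = v
          · exact Finset.mem_union_right _ (Finset.mem_insert.mpr (Or.inl huv))
          by_cases huw : u = w
          · exact Finset.mem_union_right _
              (Finset.mem_insert.mpr (Or.inr (Finset.mem_singleton.mpr huw)))
          apply Finset.mem_union_left
          have humem := Finset.mem_filter.mp hu
          apply Finset.mem_filter.mpr
          refine ⟨Finset.mem_univ _, ?_, ?_⟩
          · have hfilr : Λ.filter (fun ℓ => Function.update r ℓv w ℓ = u)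
                = Λ.filter (fun ℓ => r ℓ = u) := by
              apply Finset.filter_congr
              intro ℓ hℓ
              by_cases he : ℓ = ℓv
              · subst he
                rw [Function.update_self]
                constructor
                · intro h; exact absurd h.symm huw
                · intro h; rw [hrv] at h; exact absurd h.symm huv
              · rw [Function.update_of_ne he]
            have hfilc : Λ.filter (fun ℓ => Function.update c ℓv w ℓ = u)
                = Λ.filter (fun ℓ => c ℓ = u) := by
              apply Finset.filter_congr
              intro ℓ hℓ
              by_cases he : ℓ = ℓv
              · subst he
                rw [Function.update_self]
                constructor
                · intro h; exact absurd h.symm huw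
                · intro h; rw [hcv] at h; exact absurd h.symm huv
              · rw [Function.update_of_ne he]
            unfold stmt8inc
            rw [hfilr, hfilc]
            exact humem.2.1
          · intro ℓ hℓ h1 h2
            by_cases he : ℓ = ℓv
            · subst he
              rw [Function.update_self] at h1
              exact absurd h1.symm huw
            · rw [Function.update_of_ne he] at h1 h2
              exact humem.2.2 ℓ hℓ h1 h2
        have hcard2 : (stmt8T M Λ r c).card
            ≤ (stmt8T M Λ (Function.update r ℓv w) (Function.update c ℓv w)).card + 2 := by
          calc (stmt8T M Λ r c).card ≤ _ := Finset.card_le_card hTsub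
            _ ≤ _ + ({v, w} : Finset (Fin Q)).card := Finset.card_union_le _ _
            _ ≤ _ + 2 := by
                have : ({v, w} : Finset (Fin Q)).card ≤ 2 := by
                  calc ({v, w} : Finset (Fin Q)).card
                      ≤ ({w} : Finset (Fin Q)).card + 1 := Finset.card_insert_le _ _
                    _ ≤ 2 := by rw [Finset.card_singleton]
                omega
        have : ((stmt8T M Λ r c).card : ℝ)
            ≤ ((stmt8T M Λ (Function.update r ℓv w) (Function.update c ℓv w)).card : ℝ) + 2 := by
          exact_mod_cast hcard2
        linarith
      -- assemble
      rw [← mul_le_mul_iff_right₀ hNpos]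
      have habs : (N:ℝ) * ‖stmt8Vsum M A Λ r c‖
          = ‖(N:ℂ) * stmt8Vsum M A Λ r c‖ := by
        rw [norm_mul, Complex.norm_natCast]
      rw [habs, hkey, norm_neg]
      calc ‖∑ w ∈ A.erase v, stmt8Vsum M (A.erase v) Λ
              (Function.update r ℓv w) (Function.update c ℓv w)‖
          ≤ ∑ w ∈ A.erase v, ‖stmt8Vsum M (A.erase v) Λ
              (Function.update r ℓv w) (Function.update c ℓv w)‖ :=
            norm_sum_le _ _
        _ ≤ ∑ _w ∈ A.erase v, ((Q:ℝ)+1)^k' * B'^Λ.card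
              * (N:ℝ)^(((Q:ℝ) - (stmt8T M Λ r c).card/2) + 1) :=
            Finset.sum_le_sum hterm
        _ ≤ (Q:ℝ) * (((Q:ℝ)+1)^k' * B'^Λ.card
              * (N:ℝ)^(((Q:ℝ) - (stmt8T M Λ r c).card/2) + 1)) := by
            rw [Finset.sum_const, nsmul_eq_mul]
            apply mul_le_mul_of_nonneg_right _ (by positivity)
            have : (A.erase v).card ≤ Q := by
              calc (A.erase v).card ≤ Fintype.card (Fin Q) := Finset.card_le_univ _
                _ = Q := Fintype.card_fin _
            exact_mod_cast this
        _ = ((Q:ℝ) * ((Q:ℝ)+1)^k')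
              * (B'^Λ.card * (N:ℝ)^(((Q:ℝ) - (stmt8T M Λ r c).card/2) + 1)) := by ring
        _ ≤ ((Q:ℝ)+1)^(k'+1)
              * (B'^Λ.card * (N:ℝ)^(((Q:ℝ) - (stmt8T M Λ r c).card/2) + 1)) := by
            apply mul_le_mul_of_nonneg_right _ (by positivity)
            rw [pow_succ']
            apply mul_le_mul_of_nonneg_right _ (by positivity)
            linarith
        _ = (N:ℝ) * (((Q:ℝ)+1)^(k'+1) * B'^Λ.card
              * (N:ℝ)^((Q:ℝ) - (stmt8T M Λ r c).card/2)) := by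
            rw [Real.rpow_add hNpos, Real.rpow_one]
            ring
    · push_neg at hdg
      refine le_trans (stmt8_D_nodiag hN M hB hent hcol hrow A Λ r c
        (fun v hv ℓ hℓ h => hdg v hv ℓ hℓ h.1 h.2)) ?_
      calc B' ^ Λ.card * (N:ℝ)^((Q:ℝ) - (stmt8T M Λ r c).card/2)
          = 1 * (B' ^ Λ.card * (N:ℝ)^((Q:ℝ) - (stmt8T M Λ r c).card/2)) := (one_mul _).symm
        _ ≤ ((Q:ℝ)+1)^(k'+1) * (B' ^ Λ.card * (N:ℝ)^((Q:ℝ) - (stmt8T M Λ r c).card/2)) := by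
            apply mul_le_mul_of_nonneg_right _ (by positivity)
            exact one_le_pow₀ hQ1
        _ = ((Q:ℝ)+1)^(k'+1) * B' ^ Λ.card * (N:ℝ)^((Q:ℝ) - (stmt8T M Λ r c).card/2) := by
            ring

end stmt8aux


/-- Combinatorial entry-sum bound: if `‖M_ℓ‖ ≤ B` in ℓ²→ℓ² operator norm and `T`
is the number of "good" indices, then the sum over tuples of distinct indices of
`∏_ℓ M_ℓ[α_{q(ℓ)}, α_{q'(ℓ)}]` is bounded by `C·N^{Q - T/2}` with `C` depending
only on `L, Q, B`. -/
theorem stmt8 (L Q : ℕ) (B : ℝ) :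
    ∃ C : ℝ, ∀ (N : ℕ) (M : Fin L → Matrix (Fin N) (Fin N) ℂ),
      (∀ ℓ, ‖Matrix.toEuclideanCLM (𝕜 := ℂ) (M ℓ)‖ ≤ B) →
      ∀ (q q' : Fin L → Fin Q) (T : ℕ),
        T = Nat.card {q₀ : Fin Q //
          ((Finset.univ.filter (fun ℓ => q ℓ = q₀)).card
            + (Finset.univ.filter (fun ℓ => q' ℓ = q₀)).card = 2)
          ∧ ∀ ℓ, q ℓ = q₀ → q' ℓ = q₀ → Matrix.trace (M ℓ) = 0} →
      ‖∑ α : Fin Q → Fin N,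
          if Function.Injective α then ∏ ℓ, M ℓ (α (q ℓ)) (α (q' ℓ)) else 0‖
        ≤ C * (N : ℝ) ^ ((Q : ℝ) - T / 2) := by
  classical
  refine ⟨((Q:ℝ)+1)^Q * (max B 1)^L, ?_⟩
  intro N M hM q q' T hT
  set B' : ℝ := max B 1 with hB'def
  have hB : (1:ℝ) ≤ B' := le_max_right _ _
  have hB0 : (0:ℝ) ≤ B' := le_trans zero_le_one hB
  have hBle : ∀ ℓ, ‖Matrix.toEuclideanCLM (𝕜 := ℂ) (M ℓ)‖ ≤ B' :=
    fun ℓ => le_trans (hM ℓ) (le_max_left _ _)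
  have hcol' : ∀ ℓ j, ∑ i, ‖M ℓ i j‖ ^ 2 ≤ B' ^ 2 := by
    intro ℓ j
    refine le_trans (colbound (M ℓ) j) ?_
    exact pow_le_pow_left₀ (norm_nonneg _) (hBle ℓ) 2
  have hrow' : ∀ ℓ i, ∑ j, ‖M ℓ i j‖ ^ 2 ≤ B' ^ 2 := by
    intro ℓ i
    refine le_trans (rowbound (M ℓ) i (fun M' j => colbound M' j)) ?_
    exact pow_le_pow_left₀ (norm_nonneg _) (hBle ℓ) 2
  have hent : ∀ ℓ i j, ‖M ℓ i j‖ ≤ B' := by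
    intro ℓ i j
    have h2 : ‖M ℓ i j‖ ^ 2 ≤ B' ^ 2 := by
      refine le_trans ?_ (hcol' ℓ j)
      exact Finset.single_le_sum (f := fun i => ‖M ℓ i j‖ ^ 2)
        (fun i _ => by positivity) (Finset.mem_univ i)
    nlinarith [norm_nonneg (M ℓ i j)]
  rcases Nat.eq_zero_or_pos N with hN0 | hNpos
  · -- N = 0
    subst hN0
    rcases Nat.eq_zero_or_pos Q with hQ0 | hQpos
    · subst hQ0
      rcases Nat.eq_zero_or_pos L with hL0 | hLpos
      · subst hL0
        have hT0 : T = 0 := by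
          rw [hT]
          exact Nat.card_of_isEmpty
        subst hT0
        have hLHS : ‖∑ α : Fin 0 → Fin 0,
            if Function.Injective α then ∏ ℓ : Fin 0, M ℓ (α (q ℓ)) (α (q' ℓ)) else 0‖ = 1 := by
          rw [show (∑ α : Fin 0 → Fin 0,
              if Function.Injective α then ∏ ℓ : Fin 0, M ℓ (α (q ℓ)) (α (q' ℓ)) else 0)
            = (1 : ℂ) by simp [Function.Injective]]
          exact norm_one
        rw [hLHS]
        rw [show ((0:ℕ):ℝ) - (0:ℕ)/2 = (0:ℝ) by norm_num, Real.rpow_zero]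
        simp
      · exact Fin.elim0 (q ⟨0, hLpos⟩)
    · have : IsEmpty (Fin Q → Fin 0) := by
        have : Nonempty (Fin Q) := ⟨⟨0, hQpos⟩⟩
        infer_instance
      rw [Finset.univ_eq_empty, Finset.sum_empty, norm_zero]
      apply mul_nonneg (by positivity) (Real.rpow_nonneg (by norm_num) _)
  · -- N ≥ 1
    have hmain := stmt8_D (Q := Q) (L₀ := L) hNpos M hB hent hcol' hrow' Q
      Finset.univ Finset.univ q q'
      (by rw [Finset.card_univ, Fintype.card_fin])
      (fun ℓ _ => ⟨Finset.mem_univ _, Finset.mem_univ _⟩)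
    have hVeq : stmt8Vsum M Finset.univ Finset.univ q q'
        = ∑ α : Fin Q → Fin N,
            if Function.Injective α then ∏ ℓ, M ℓ (α (q ℓ)) (α (q' ℓ)) else 0 := by
      unfold stmt8Vsum
      apply Finset.sum_congr rfl
      intro α _
      apply if_congr _ rfl rfl
      rw [Finset.coe_univ]
      exact Set.injOn_univ
    have hTeq : T = (stmt8T M Finset.univ q q').card := by
      rw [hT, Nat.card_eq_fintype_card, Fintype.card_subtype]
      congr 1
      apply Finset.filter_congr
      intro v _
      constructor
      · rintro ⟨h1, h2⟩
        exact ⟨h1, fun ℓ _ => h2 ℓ⟩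
      · rintro ⟨h1, h2⟩
        exact ⟨h1, fun ℓ => h2 ℓ (Finset.mem_univ ℓ)⟩
    rw [← hVeq]
    refine le_trans hmain (le_of_eq ?_)
    rw [Finset.card_univ, Fintype.card_fin, hTeq]
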